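/- For any finite poset P on [n], the set of P-partitions is the disjoint union over all linear extensions π of P of the sets of π-partitions (the fundamental theorem of P-partitions). -/

import Mathlib

open Finset
open scoped Classical

/-- The value `π(s)` (0-indexed) of a permutation of `Fin n`, as a natural number. -/
def aval (n : ℕ) (π : Equiv.Perm (Fin n)) (s : ℕ) : ℕ :=
  if h : s < n then (π ⟨s, h⟩ : ℕ) else s

/-- The descent set of `π ∈ S_n` (0-indexed positions `s` with `π(s) > π(s+1)`). -/
def desSetA (n : ℕ) (π : Equiv.Perm (Fin n)) : Finset ℕ :=
  (Finset.range (n - 1)).filter (fun s => aval n π (s + 1) < aval n π s)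

/-- The descent number of `π ∈ S_n`. -/
def desA (n : ℕ) (π : Equiv.Perm (Fin n)) : ℕ := (desSetA n π).card

/-- The cyclic descent number of `π ∈ S_n`: ordinary descents together with a
descent in the last position when `π(n) > π(1)` (0-indexed: `π(n-1) > π(0)`). -/
def cdesA (n : ℕ) (π : Equiv.Perm (Fin n)) : ℕ :=
  desA n π + (if aval n π 0 < aval n π (n - 1) then 1 else 0)

/-- `f` is a `P`-partition for the partial order `r` on `Fin n`:
`f i ≤ f j` whenever `i <_P j`, with strict inequality when moreover `j < i` in `ℤ`. -/
def IsPPart {n : ℕ} {X : Type*} [LinearOrder X] (r : Fin n → Fin n → Prop)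
    (f : Fin n → X) : Prop :=
  ∀ i j, r i j → i ≠ j → f i ≤ f j ∧ (j < i → f i < f j)

/-- `σ` (viewed as the total order `σ(1) < σ(2) < ⋯ < σ(n)`) is a linear extension
of the partial order `r`. -/
def IsLinExt {n : ℕ} (r : Fin n → Fin n → Prop) (σ : Equiv.Perm (Fin n)) : Prop :=
  ∀ i j, r i j → σ⁻¹ i ≤ σ⁻¹ j

/-- Fundamental theorem of `P`-partitions: the set of `P`-partitions is the
disjoint union, over all linear extensions `σ` of `P`, of the sets of
`σ`-partitions. -/
theorem ftpp {n : ℕ} {X : Type*} [LinearOrder X] (r : Fin n → Fin n → Prop)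
    (hr : IsPartialOrder (Fin n) r) (f : Fin n → X) :
    IsPPart r f ↔
      ∃! σ : Equiv.Perm (Fin n),
        IsLinExt r σ ∧ IsPPart (fun a b => σ⁻¹ a ≤ σ⁻¹ b) f := by

  classical
  constructor
  · intro hf
    set g : Fin n → Lex (X × Fin n) := fun a => toLex (f a, a) with hg
    have hginj : Function.Injective g := by
      intro a b hab
      have := congrArg (fun p => (ofLex p).2) hab
      simpa [hg] using this
    set σ : Equiv.Perm (Fin n) := Tuple.sort g with hσ
    have hsm : StrictMono (g ∘ σ) :=
      (Tuple.monotone_sort g).strictMono_of_injective (hginj.comp σ.injective)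
    have key : ∀ a b : Fin n, σ⁻¹ a < σ⁻¹ b ↔ g a < g b := by
      intro a b
      have := hsm.lt_iff_lt (a := σ⁻¹ a) (b := σ⁻¹ b)
      simpa using this.symm
    -- characterization of g-lex order
    have glt : ∀ a b : Fin n, g a < g b ↔ (f a < f b ∨ (f a = f b ∧ a < b)) := by
      intro a b
      simp [hg, Prod.Lex.lt_iff]
    have hglt_of : ∀ a b : Fin n, a ≠ b → f a ≤ f b → (b < a → f a < f b) → g a < g b := by
      intro a b hne hle hstr
      rcases lt_or_eq_of_le hle with h | h
      · exact (glt a b).mpr (Or.inl h)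
      · refine (glt a b).mpr (Or.inr ⟨h, ?_⟩)
        rcases lt_trichotomy a b with h1 | h1 | h1
        · exact h1
        · exact absurd h1 hne
        · exact absurd (hstr h1) (by simp [h])
    -- the key uniqueness criterion: any valid τ has τ⁻¹ a < τ⁻¹ b ↔ g a < g b
    have crit : ∀ τ : Equiv.Perm (Fin n),
        IsPPart (fun a b => τ⁻¹ a ≤ τ⁻¹ b) f →
        ∀ a b : Fin n, τ⁻¹ a < τ⁻¹ b ↔ g a < g b := by
      intro τ hτ
      have fwd : ∀ a b : Fin n, τ⁻¹ a < τ⁻¹ b → g a < g b := by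
        intro a b hab
        have hne : a ≠ b := fun h => by simp [h] at hab
        obtain ⟨h1, h2⟩ := hτ a b (le_of_lt hab) hne
        exact hglt_of a b hne h1 h2
      intro a b
      refine ⟨fwd a b, fun h => ?_⟩
      by_contra hc
      have hne : a ≠ b := by
        intro hab; subst hab; exact lt_irrefl _ h
      have : τ⁻¹ b < τ⁻¹ a := by
        rcases lt_or_ge (τ⁻¹ a) (τ⁻¹ b) with h1 | h1
        · exact absurd h1 hc
        · exact lt_of_le_of_ne h1 (fun he => hne ((τ⁻¹).injective he).symm)
      exact absurd (fwd b a this) (asymm h)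
    -- σ satisfies the criterion
    have hσP : IsPPart (fun a b => σ⁻¹ a ≤ σ⁻¹ b) f := by
      intro a b hab hne
      have hlt : σ⁻¹ a < σ⁻¹ b :=
        lt_of_le_of_ne hab (fun he => hne ((σ⁻¹).injective he))
      have := (key a b).mp hlt
      rcases (glt a b).mp this with h | ⟨h, h2⟩
      · exact ⟨le_of_lt h, fun _ => h⟩
      · exact ⟨le_of_eq h, fun hba => absurd h2 (asymm hba)⟩
    have hσL : IsLinExt r σ := by
      intro i j hij
      by_cases hne : i = j
      · simp [hne]
      · have ⟨h1, h2⟩ := hf i j hij hne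
        exact le_of_lt ((key i j).mpr (hglt_of i j hne h1 h2))
    refine ⟨σ, ⟨hσL, hσP⟩, ?_⟩
    intro τ ⟨_, hτP⟩
    -- τ⁻¹ ∘ σ is a strictly monotone bijection of Fin n, hence the identity
    have hiff : ∀ a b : Fin n, σ⁻¹ a < σ⁻¹ b ↔ τ⁻¹ a < τ⁻¹ b := by
      intro a b; rw [key a b, ← crit τ hτP a b]
    have hsm2 : StrictMono (fun i => τ⁻¹ (σ i)) := by
      intro x y hxy
      have : σ⁻¹ (σ x) < σ⁻¹ (σ y) := by simpa using hxy
      exact (hiff (σ x) (σ y)).mp this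
    have hsurj : Function.Surjective (fun i => τ⁻¹ (σ i)) :=
      ((σ.trans τ⁻¹)).surjective
    have e : Fin n ≃o Fin n := StrictMono.orderIsoOfSurjective _ hsm2 hsurj
    have hid : ∀ i, τ⁻¹ (σ i) = i := by
      intro i
      have : ((StrictMono.orderIsoOfSurjective _ hsm2 hsurj) i : ℕ) = i :=
        Fin.coe_orderIso_apply _ i
      have h2 : (StrictMono.orderIsoOfSurjective _ hsm2 hsurj) i = τ⁻¹ (σ i) := rfl
      rw [h2] at this
      exact Fin.ext this
    ext i
    have h4 : σ i = τ i := by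
      have := congrArg τ (hid i); simpa using this
    exact congrArg Fin.val h4.symm
  · rintro ⟨σ, ⟨hL, hP⟩, -⟩
    intro i j hij hne
    exact hP i j (hL i j hij) hne
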